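/- Suppose θ ↦ J̄(θ; ū) has L-Lipschitz gradient for all ū, J̲(θ, u̲) ≤ J(θ) ≤ J̄(θ, ū) for all arguments, and the iterates satisfy θ^{(t-1)} = θ^{(t-2)} − (1/L) ∇J̄(θ^{(t-2)}; ū^{(t-1)}) together with the ReGeMM condition J̄(θ^{(t-1)}; ū^{(t)}) ≤ J̄(θ^{(t-2)}; ū^{(t-1)}) − η c_t where c_t = J̄(θ^{(t-2)}, ū^{(t-1)}) − J̲(θ^{(t-1)}, u̲^{(t)}) and η ∈ (0,1). Then c_t ≥ (1/(2L)) ‖∇J̄(θ^{(t-2)}; ū^{(t-1)})‖²; consequently, if c_t → 0 then ∇J̄(θ^{(t-2)}; ū^{(t-1)}) → 0. -/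

import Mathlib

open Filter

open scoped RealInnerProductSpace in
/-- Descent lemma: if `f` has `L`-Lipschitz gradient then
`f y ≤ f x + ⟪∇f x, y - x⟫ + L/2 ‖y - x‖²`. -/
lemma descent_lemma {F : Type*} [NormedAddCommGroup F] [InnerProductSpace ℝ F]
    [CompleteSpace F] (f : F → ℝ) (hf : Differentiable ℝ f) {L : NNReal}
    (hlip : LipschitzWith L (gradient f)) (x y : F) :
    f y ≤ f x + ⟪gradient f x, y - x⟫ + L / 2 * ‖y - x‖ ^ 2 := by
  set v := y - x with hv
  have key : ∀ z : F, ∀ w : F, (fderiv ℝ f z) w = ⟪gradient f z, w⟫ := by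
    intro z w
    rw [gradient, InnerProductSpace.toDual_symm_apply]
  have hcurve : ∀ t : ℝ, HasDerivAt (fun s : ℝ => x + s • v) v t := by
    intro t
    simpa using ((hasDerivAt_id t).smul_const v).const_add x
  have hg : ∀ t : ℝ, HasDerivAt (fun s : ℝ => f (x + s • v))
      (⟪gradient f (x + t • v), v⟫) t := by
    intro t
    have := (hf (x + t • v)).hasFDerivAt.comp_hasDerivAt t (hcurve t)
    rw [key] at this; exact this
  have hgradcont : Continuous (gradient f) := hlip.continuous
  have hcont : Continuous fun t : ℝ => ⟪gradient f (x + t • v), v⟫ := by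
    have h1 : Continuous fun t : ℝ => x + t • v := by fun_prop
    exact (hgradcont.comp h1).inner continuous_const
  have hFTC : f (x + (1:ℝ) • v) - f (x + (0:ℝ) • v)
      = ∫ t in (0:ℝ)..1, ⟪gradient f (x + t • v), v⟫ := by
    rw [intervalIntegral.integral_eq_sub_of_hasDerivAt (fun t _ => hg t)
      (hcont.intervalIntegrable 0 1)]
  have hbound : ∀ t ∈ Set.Icc (0:ℝ) 1,
      ⟪gradient f (x + t • v), v⟫ ≤ ⟪gradient f x, v⟫ + (L : ℝ) * ‖v‖ ^ 2 * t := by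
    intro t ht
    have h1 : ⟪gradient f (x + t • v), v⟫ - ⟪gradient f x, v⟫
        = ⟪gradient f (x + t • v) - gradient f x, v⟫ := by
      rw [inner_sub_left]
    have h2 : ⟪gradient f (x + t • v) - gradient f x, v⟫
        ≤ ‖gradient f (x + t • v) - gradient f x‖ * ‖v‖ := real_inner_le_norm _ _
    have h3 : ‖gradient f (x + t • v) - gradient f x‖ ≤ (L : ℝ) * (t * ‖v‖) := by
      have := hlip.dist_le_mul (x + t • v) x
      rw [dist_eq_norm, dist_eq_norm] at this
      calc ‖gradient f (x + t • v) - gradient f x‖ ≤ (L : ℝ) * ‖x + t • v - x‖ := this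
        _ = (L : ℝ) * (|t| * ‖v‖) := by rw [add_sub_cancel_left, norm_smul, Real.norm_eq_abs]
        _ = (L : ℝ) * (t * ‖v‖) := by rw [abs_of_nonneg ht.1]
    nlinarith [norm_nonneg v, h2.trans (mul_le_mul_of_nonneg_right h3 (norm_nonneg v))]
  have hint : (∫ t in (0:ℝ)..1, ⟪gradient f (x + t • v), v⟫)
      ≤ ∫ t in (0:ℝ)..1, (⟪gradient f x, v⟫ + (L : ℝ) * ‖v‖ ^ 2 * t) := by
    apply intervalIntegral.integral_mono_on (by norm_num)
      (hcont.intervalIntegrable 0 1)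
      ((Continuous.intervalIntegrable (by fun_prop) 0 1))
    exact hbound
  have hrhs : (∫ t in (0:ℝ)..1, (⟪gradient f x, v⟫ + (L : ℝ) * ‖v‖ ^ 2 * t))
      = ⟪gradient f x, v⟫ + (L : ℝ) * ‖v‖ ^ 2 / 2 := by
    rw [intervalIntegral.integral_add (intervalIntegrable_const)
      (((by fun_prop : Continuous fun t : ℝ => (L : ℝ) * ‖v‖ ^ 2 * t).intervalIntegrable 0 1))]
    have h2 : (∫ t in (0:ℝ)..1, (L : ℝ) * ‖v‖ ^ 2 * t)
        = (L : ℝ) * ‖v‖ ^ 2 * ((1:ℝ) ^ 2 - 0 ^ 2) / 2 := by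
      rw [intervalIntegral.integral_const_mul, integral_id]; ring
    rw [h2]; simp
  have : f (x + (1:ℝ) • v) - f (x + (0:ℝ) • v) ≤ ⟪gradient f x, v⟫ + (L : ℝ) * ‖v‖ ^ 2 / 2 := by
    rw [hFTC]; exact hint.trans_eq hrhs
  have hxy : x + (1:ℝ) • v = y := by rw [hv]; simp
  have hx0 : x + (0:ℝ) • v = x := by simp
  rw [hxy, hx0] at this
  linarith

open scoped RealInnerProductSpace in
/-- Gradient-step descent: one step of size `1/L` decreases `f` by `(1/(2L)) ‖∇f x‖²`. -/
lemma grad_step_descent {F : Type*} [NormedAddCommGroup F] [InnerProductSpace ℝ F]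
    [CompleteSpace F] (f : F → ℝ) (hf : Differentiable ℝ f) {L : ℝ} (hL : 0 < L)
    (hlip : LipschitzWith (Real.toNNReal L) (gradient f)) (x : F) :
    f (x - (1 / L) • gradient f x) ≤ f x - (1 / (2 * L)) * ‖gradient f x‖ ^ 2 := by
  have h := descent_lemma f hf hlip x (x - (1 / L) • gradient f x)
  have hLr : ((Real.toNNReal L : NNReal) : ℝ) = L := Real.coe_toNNReal L hL.le
  rw [hLr] at h
  have hsub : x - (1 / L) • gradient f x - x = -((1 / L) • gradient f x) := by abel
  rw [hsub] at h
  have hinner : ⟪gradient f x, -((1 / L) • gradient f x)⟫ = -(1 / L) * ‖gradient f x‖ ^ 2 := by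
    rw [inner_neg_right, real_inner_smul_right, real_inner_self_eq_norm_sq]
    ring
  have hnorm : ‖-((1 / L) • gradient f x)‖ ^ 2 = (1 / L) ^ 2 * ‖gradient f x‖ ^ 2 := by
    rw [norm_neg, norm_smul, Real.norm_eq_abs, mul_pow, sq_abs]
  rw [hinner, hnorm] at h
  have hL' : L ≠ 0 := hL.ne'
  calc f (x - (1 / L) • gradient f x)
      ≤ f x + -(1 / L) * ‖gradient f x‖ ^ 2 + L / 2 * ((1 / L) ^ 2 * ‖gradient f x‖ ^ 2) := h
    _ = f x - (1 / (2 * L)) * ‖gradient f x‖ ^ 2 := by field_simp; ring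

/-- ReGeMM with gradient steps (reindexed with `t-2 ↦ t`): the gap
`c t = J̄(θ^{(t)}, ū^{(t+1)}) − J̲(θ^{(t+1)}, u̲^{(t+2)})` dominates
`(1/(2L)) ‖∇J̄(θ^{(t)}; ū^{(t+1)})‖²`; hence `c t → 0` forces the gradients to 0. -/
theorem stmt7 {d : ℕ} {U U' : Type*}
    (Jub : EuclideanSpace ℝ (Fin d) → U → ℝ)
    (Jlb : EuclideanSpace ℝ (Fin d) → U' → ℝ)
    (J : EuclideanSpace ℝ (Fin d) → ℝ)
    (hlow : ∀ θ u', Jlb θ u' ≤ J θ) (hup : ∀ θ u, J θ ≤ Jub θ u)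
    (L : ℝ) (hL : 0 < L) (η : ℝ) (hη0 : 0 < η) (hη1 : η < 1)
    (hdiff : ∀ u : U, Differentiable ℝ (fun θ => Jub θ u))
    (hlip : ∀ u : U, LipschitzWith (Real.toNNReal L) (gradient (fun θ => Jub θ u)))
    (θ : ℕ → EuclideanSpace ℝ (Fin d)) (ub : ℕ → U) (lb : ℕ → U') (c : ℕ → ℝ)
    (hc : ∀ t, c t = Jub (θ t) (ub (t + 1)) - Jlb (θ (t + 1)) (lb (t + 2)))
    (hstep : ∀ t, θ (t + 1) = θ t - (1 / L) • gradient (fun x => Jub x (ub (t + 1))) (θ t))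
    (hcond : ∀ t, Jub (θ (t + 1)) (ub (t + 2)) ≤ Jub (θ t) (ub (t + 1)) - η * c t) :
    (∀ t, (1 / (2 * L)) * ‖gradient (fun x => Jub x (ub (t + 1))) (θ t)‖ ^ 2 ≤ c t) ∧
    (Tendsto c atTop (nhds 0) →
      Tendsto (fun t => gradient (fun x => Jub x (ub (t + 1))) (θ t)) atTop (nhds 0)) := by
  have hmain : ∀ t, (1 / (2 * L)) * ‖gradient (fun x => Jub x (ub (t + 1))) (θ t)‖ ^ 2 ≤ c t := by
    intro t
    have hdesc := grad_step_descent (fun x => Jub x (ub (t + 1))) (hdiff _) hL (hlip _) (θ t)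
    rw [← hstep t] at hdesc
    have h1 : Jlb (θ (t + 1)) (lb (t + 2)) ≤ Jub (θ (t + 1)) (ub (t + 1)) :=
      (hlow _ _).trans (hup _ _)
    rw [hc t]
    linarith
  refine ⟨hmain, fun hc0 => ?_⟩
  have hsq : Tendsto (fun t => ‖gradient (fun x => Jub x (ub (t + 1))) (θ t)‖ ^ 2)
      atTop (nhds 0) := by
    have h2L : (0:ℝ) < 1 / (2 * L) := by positivity
    have := squeeze_zero (fun t => by positivity)
      (fun t => hmain t) hc0
    have h := this.const_mul (2 * L)
    simp only [mul_zero] at h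
    convert h using 2 with t
    field_simp
  have hnorm : Tendsto (fun t => ‖gradient (fun x => Jub x (ub (t + 1))) (θ t)‖)
      atTop (nhds 0) := by
    have h := (Real.continuous_sqrt.tendsto 0).comp hsq
    rw [Real.sqrt_zero] at h
    have heq : (fun t => ‖gradient (fun x => Jub x (ub (t + 1))) (θ t)‖)
        = (fun s => Real.sqrt s) ∘ (fun t => ‖gradient (fun x => Jub x (ub (t + 1))) (θ t)‖ ^ 2) := by
      funext t
      simp [Function.comp, Real.sqrt_sq (norm_nonneg _)]
    rw [heq]
    exact h
  exact tendsto_zero_iff_norm_tendsto_zero.2 hnorm
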